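/- Let 𝓗 : ℝ² → ℝ be positive, positively 2-homogeneous and C¹, with half-period τ₊ = ∫₀^π dθ/(2𝓗(cos θ, sin θ)). If z : [a,b] → ℝ² \ {0} solves Jż = α(t)∇𝓗₁(z) + (1-α(t))∇𝓗₂(z) with 0 ≤ α ≤ 1 and performs exactly m half-rotations around the origin on [a,b] (i.e., θ(a) - θ(b) = mπ), then m τ_{2+} ≤ b - a ≤ m τ_{1+}, where τ_{i+} = ∫₀^π dθ/(2𝓗ᵢ(cos θ, sin θ)). -/

import Mathlib

open MeasureTheory

/-- The standard symplectic matrix `J` acting on ℝ². -/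
noncomputable def Jmap (w : EuclideanSpace ℝ (Fin 2)) : EuclideanSpace ℝ (Fin 2) :=
  (WithLp.equiv 2 (Fin 2 → ℝ)).symm ![-(w 1), w 0]

/-- The unit-circle parametrization `θ ↦ (cos θ, sin θ)`. -/
noncomputable def uc (θ : ℝ) : EuclideanSpace ℝ (Fin 2) :=
  (WithLp.equiv 2 (Fin 2 → ℝ)).symm ![Real.cos θ, Real.sin θ]

open Real
open scoped RealInnerProductSpace

lemma uc_zero (s : ℝ) : uc s 0 = Real.cos s := rfl
lemma uc_one (s : ℝ) : uc s 1 = Real.sin s := rfl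
lemma Jmap_zero (w : EuclideanSpace ℝ (Fin 2)) : Jmap w 0 = -(w 1) := rfl
lemma Jmap_one (w : EuclideanSpace ℝ (Fin 2)) : Jmap w 1 = w 0 := rfl

lemma inner_E2 (v w : EuclideanSpace ℝ (Fin 2)) : ⟪v, w⟫ = v 0 * w 0 + v 1 * w 1 := by
  simp [PiLp.inner_apply, RCLike.inner_apply, Fin.sum_univ_two, mul_comm]

lemma E2_ext {v w : EuclideanSpace ℝ (Fin 2)} (h0 : v 0 = w 0) (h1 : v 1 = w 1) : v = w := by
  ext i; fin_cases i <;> assumption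

lemma smul_apply' (c : ℝ) (v : EuclideanSpace ℝ (Fin 2)) (i : Fin 2) : (c • v) i = c * v i := rfl
lemma add_apply' (v w : EuclideanSpace ℝ (Fin 2)) (i : Fin 2) : (v + w) i = v i + w i := rfl
lemma neg_apply' (v : EuclideanSpace ℝ (Fin 2)) (i : Fin 2) : (-v) i = -(v i) := rfl

lemma Jmap_smul (c : ℝ) (v : EuclideanSpace ℝ (Fin 2)) : Jmap (c • v) = c • Jmap v := by
  apply E2_ext <;> simp [Jmap_zero, Jmap_one, smul_apply', mul_comm]

lemma inner_uc_self (s : ℝ) : ⟪uc s, uc s⟫ = 1 := by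
  simp only [inner_E2, uc_zero, uc_one]; nlinarith [Real.sin_sq_add_cos_sq s]

lemma inner_uc_Juc (s : ℝ) : ⟪uc s, Jmap (uc s)⟫ = 0 := by
  simp [inner_E2, uc_zero, uc_one, Jmap_zero, Jmap_one]; ring

lemma inner_Juc_Juc (s : ℝ) : ⟪Jmap (uc s), Jmap (uc s)⟫ = 1 := by
  simp only [inner_E2, uc_zero, uc_one, Jmap_zero, Jmap_one]; nlinarith [Real.sin_sq_add_cos_sq s]

lemma inner_J_antisym (v w : EuclideanSpace ℝ (Fin 2)) : ⟪v, Jmap w⟫ = -⟪Jmap v, w⟫ := by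
  simp [inner_E2, Jmap_zero, Jmap_one]

lemma uc_ne_zero (s : ℝ) : uc s ≠ 0 := by
  intro h
  have := inner_uc_self s
  rw [h, inner_zero_left] at this
  norm_num at this

lemma uc_neg (s : ℝ) : uc (s + Real.pi) = -uc s := by
  apply E2_ext <;> simp [uc_zero, uc_one, neg_apply', Real.cos_add_pi, Real.sin_add_pi]

lemma hasDerivAt_uc (s : ℝ) : HasDerivAt uc (Jmap (uc s)) s := by
  have h : HasDerivAt (fun t => ![Real.cos t, Real.sin t] : ℝ → (Fin 2 → ℝ))
      (![-Real.sin s, Real.cos s]) s := by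
    rw [hasDerivAt_pi]
    intro i
    fin_cases i
    · simpa using Real.hasDerivAt_cos s
    · simpa using Real.hasDerivAt_sin s
  have := ((PiLp.continuousLinearEquiv 2 ℝ (fun _ : Fin 2 => ℝ)).symm :
      (Fin 2 → ℝ) →L[ℝ] EuclideanSpace ℝ (Fin 2)).hasFDerivAt.comp_hasDerivAt s h
  exact this

lemma continuous_uc : Continuous uc := by
  exact continuous_iff_continuousAt.2 fun s => (hasDerivAt_uc s).continuousAt

lemma Hpos (H : EuclideanSpace ℝ (Fin 2) → ℝ)
    (hhom : ∀ w : EuclideanSpace ℝ (Fin 2), w ≠ 0 → ∀ lam : ℝ, 0 < lam →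
      0 < H (lam • w) ∧ H (lam • w) = lam ^ 2 * H w)
    {w : EuclideanSpace ℝ (Fin 2)} (hw : w ≠ 0) : 0 < H w := by
  have := (hhom w hw 1 one_pos).1
  simpa using this

lemma euler (H : EuclideanSpace ℝ (Fin 2) → ℝ) (hC1 : ContDiff ℝ 1 H)
    (hhom : ∀ w : EuclideanSpace ℝ (Fin 2), w ≠ 0 → ∀ lam : ℝ, 0 < lam →
      0 < H (lam • w) ∧ H (lam • w) = lam ^ 2 * H w)
    {w : EuclideanSpace ℝ (Fin 2)} (hw : w ≠ 0) : ⟪gradient H w, w⟫ = 2 * H w := by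
  have hd : HasFDerivAt H (fderiv ℝ H w) w :=
    (hC1.differentiable one_ne_zero w).hasFDerivAt
  have h1 : HasDerivAt (fun lam : ℝ => H (lam • w)) (fderiv ℝ H w w) 1 := by
    have hs : HasDerivAt (fun lam : ℝ => lam • w) ((1:ℝ) • w) 1 :=
      (hasDerivAt_id (1:ℝ)).smul_const w
    have hd' : HasFDerivAt H (fderiv ℝ H w) ((1:ℝ) • w) := by simpa using hd
    have := hd'.comp_hasDerivAt 1 hs; rw [one_smul] at this; exact this
  have h2 : HasDerivAt (fun lam : ℝ => lam ^ 2 * H w) (2 * H w) 1 := by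
    simpa using (hasDerivAt_pow 2 (1:ℝ)).mul_const (H w)
  have heq : (fun lam : ℝ => H (lam • w)) =ᶠ[nhds (1:ℝ)] fun lam => lam ^ 2 * H w := by
    filter_upwards [eventually_gt_nhds one_pos] with lam hlam
    exact (hhom w hw lam hlam).2
  have h1' : HasDerivAt (fun lam : ℝ => lam ^ 2 * H w) (fderiv ℝ H w w) 1 :=
    h1.congr_of_eventuallyEq heq.symm
  have hkey : fderiv ℝ H w w = 2 * H w := h1'.unique h2
  rw [← hkey]
  simp [gradient, InnerProductSpace.toDual_symm_apply]

lemma integral_m_pi {f : ℝ → ℝ} (hf : Continuous f) (hper : Function.Periodic f Real.pi)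
    (m : ℕ) (c : ℝ) :
    ∫ s in c..(c + m * Real.pi), f s = m * ∫ s in (0:ℝ)..Real.pi, f s := by
  have h := hper.intervalIntegral_add_zsmul_eq (m : ℤ) c
    (fun t₁ t₂ => hf.intervalIntegrable t₁ t₂)
  have h2 := hper.intervalIntegral_add_eq c 0
  rw [show ((m : ℤ) • Real.pi) = (m : ℝ) * Real.pi by push_cast [zsmul_eq_mul]; ring] at h
  rw [h, h2]
  push_cast [zsmul_eq_mul]
  ring_nf

/-- If a solution of the convex-combination system performs exactly `m`
half-rotations on `[a,b]`, then `m τ2p ≤ b - a ≤ m τ1p`. -/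
theorem half_rotation_count
    (H₁ H₂ : EuclideanSpace ℝ (Fin 2) → ℝ)
    (hC1₁ : ContDiff ℝ 1 H₁) (hC1₂ : ContDiff ℝ 1 H₂)
    (hhom₁ : ∀ w : EuclideanSpace ℝ (Fin 2), w ≠ 0 → ∀ lam : ℝ, 0 < lam →
      0 < H₁ (lam • w) ∧ H₁ (lam • w) = lam ^ 2 * H₁ w)
    (hhom₂ : ∀ w : EuclideanSpace ℝ (Fin 2), w ≠ 0 → ∀ lam : ℝ, 0 < lam →
      0 < H₂ (lam • w) ∧ H₂ (lam • w) = lam ^ 2 * H₂ w)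
    (hle : ∀ w, H₁ w ≤ H₂ w)
    (heven₁ : ∀ w, H₁ (-w) = H₁ w) (heven₂ : ∀ w, H₂ (-w) = H₂ w)
    (τ1p τ2p : ℝ)
    (hτ₁ : τ1p = ∫ s in (0:ℝ)..Real.pi, 1 / (2 * H₁ (uc s)))
    (hτ₂ : τ2p = ∫ s in (0:ℝ)..Real.pi, 1 / (2 * H₂ (uc s)))
    (a b : ℝ) (hab : a < b)
    (z z' : ℝ → EuclideanSpace ℝ (Fin 2))
    (α : ℝ → ℝ) (hα : ∀ t, α t ∈ Set.Icc (0 : ℝ) 1)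
    (hz : ∀ t ∈ Set.Icc a b, HasDerivAt z (z' t) t)
    (hz0 : ∀ t ∈ Set.Icc a b, z t ≠ 0)
    (hODE : ∀ t ∈ Set.Icc a b,
      Jmap (z' t) = α t • gradient H₁ (z t) + (1 - α t) • gradient H₂ (z t))
    (ρ θ θ' : ℝ → ℝ)
    (hρpos : ∀ t ∈ Set.Icc a b, 0 < ρ t)
    (hpolar : ∀ t ∈ Set.Icc a b, z t = ρ t • uc (θ t))
    (hθ : ∀ t ∈ Set.Icc a b, HasDerivAt θ (θ' t) t)
    (m : ℕ) (hm : θ a - θ b = m * Real.pi) :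
    m * τ2p ≤ b - a ∧ b - a ≤ m * τ1p := by
  have h1pos : ∀ s, 0 < H₁ (uc s) := fun s => Hpos H₁ hhom₁ (uc_ne_zero s)
  have h2pos : ∀ s, 0 < H₂ (uc s) := fun s => Hpos H₂ hhom₂ (uc_ne_zero s)
  set f₁ : ℝ → ℝ := fun s => 1 / (2 * H₁ (uc s)) with hf₁def
  set f₂ : ℝ → ℝ := fun s => 1 / (2 * H₂ (uc s)) with hf₂def
  have hcont₁ : Continuous f₁ :=
    continuous_const.div (continuous_const.mul (hC1₁.continuous.comp continuous_uc))
      (fun s => ne_of_gt (by have := h1pos s; positivity))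
  have hcont₂ : Continuous f₂ :=
    continuous_const.div (continuous_const.mul (hC1₂.continuous.comp continuous_uc))
      (fun s => ne_of_gt (by have := h2pos s; positivity))
  have hper₁ : Function.Periodic f₁ Real.pi := fun s => by
    simp only [hf₁def, uc_neg, heven₁]
  have hper₂ : Function.Periodic f₂ Real.pi := fun s => by
    simp only [hf₂def, uc_neg, heven₂]
  set F₁ : ℝ → ℝ := fun x => ∫ s in (0:ℝ)..x, f₁ s with hF₁def
  set F₂ : ℝ → ℝ := fun x => ∫ s in (0:ℝ)..x, f₂ s with hF₂def
  have hF₁ : ∀ x, HasDerivAt F₁ (f₁ x) x := fun x =>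
    (hcont₁.integral_hasStrictDerivAt 0 x).hasDerivAt
  have hF₂ : ∀ x, HasDerivAt F₂ (f₂ x) x := fun x =>
    (hcont₂.integral_hasStrictDerivAt 0 x).hasDerivAt
  -- the key pointwise identity for θ'
  have hkey : ∀ t ∈ Set.Ioo a b,
      θ' t = -(2 * (α t * H₁ (uc (θ t)) + (1 - α t) * H₂ (uc (θ t)))) := by
    intro t ht
    have htI : t ∈ Set.Icc a b := Set.Ioo_subset_Icc_self ht
    have hnhds : Set.Icc a b ∈ nhds t := Icc_mem_nhds ht.1 ht.2
    have hU : HasDerivAt (fun τ => uc (θ τ)) (θ' t • Jmap (uc (θ t))) t :=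
      (hasDerivAt_uc (θ t)).scomp t (hθ t htI)
    have hρ_eq : Set.EqOn ρ (fun τ => ⟪z τ, uc (θ τ)⟫) (Set.Icc a b) := by
      intro τ hτ
      simp only [hpolar τ hτ, real_inner_smul_left, inner_uc_self, mul_one]
    have hρ' : HasDerivAt ρ (⟪z t, θ' t • Jmap (uc (θ t))⟫ + ⟪z' t, uc (θ t)⟫) t := by
      have hg := HasDerivAt.inner ℝ (hz t htI) hU
      exact hg.congr_of_eventuallyEq (Filter.eventuallyEq_of_mem hnhds hρ_eq)
    have hw : HasDerivAt (fun τ => ρ τ • uc (θ τ))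
        (ρ t • (θ' t • Jmap (uc (θ t))) +
          (⟪z t, θ' t • Jmap (uc (θ t))⟫ + ⟪z' t, uc (θ t)⟫) • uc (θ t)) t :=
      hρ'.smul hU
    have hz'eq : z' t = ρ t • (θ' t • Jmap (uc (θ t))) +
        (⟪z t, θ' t • Jmap (uc (θ t))⟫ + ⟪z' t, uc (θ t)⟫) • uc (θ t) := by
      refine (hz t htI).unique (hw.congr_of_eventuallyEq ?_)
      exact Filter.eventuallyEq_of_mem hnhds hpolar
    have hρt := hρpos t htI
    have hzt := hpolar t htI
    have lhs : ⟪z' t, Jmap (z t)⟫ = ρ t ^ 2 * θ' t := by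
      rw [hzt, Jmap_smul, hz'eq]
      simp only [inner_add_left, real_inner_smul_left, real_inner_smul_right,
        inner_uc_Juc, inner_Juc_Juc]
      ring
    have rhs : ⟪z' t, Jmap (z t)⟫
        = -(ρ t ^ 2 * (2 * (α t * H₁ (uc (θ t)) + (1 - α t) * H₂ (uc (θ t))))) := by
      rw [inner_J_antisym, hODE t htI, inner_add_left, real_inner_smul_left,
        real_inner_smul_left, euler H₁ hC1₁ hhom₁ (hz0 t htI),
        euler H₂ hC1₂ hhom₂ (hz0 t htI)]
      have e₁ : H₁ (z t) = ρ t ^ 2 * H₁ (uc (θ t)) := by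
        rw [hzt]; exact (hhom₁ _ (uc_ne_zero _) (ρ t) hρt).2
      have e₂ : H₂ (z t) = ρ t ^ 2 * H₂ (uc (θ t)) := by
        rw [hzt]; exact (hhom₂ _ (uc_ne_zero _) (ρ t) hρt).2
      rw [e₁, e₂]; ring
    have hsq : (ρ t ^ 2 : ℝ) ≠ 0 := pow_ne_zero 2 (ne_of_gt hρt)
    have h2 : ρ t ^ 2 * θ' t
        = ρ t ^ 2 * (-(2 * (α t * H₁ (uc (θ t)) + (1 - α t) * H₂ (uc (θ t))))) := by
      rw [lhs.symm.trans rhs]; ring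
    exact mul_left_cancel₀ hsq h2
  -- bounds on -θ'
  have hbound : ∀ t ∈ Set.Ioo a b,
      2 * H₁ (uc (θ t)) ≤ -θ' t ∧ -θ' t ≤ 2 * H₂ (uc (θ t)) := by
    intro t ht
    have h := hkey t ht
    obtain ⟨hα0, hα1⟩ := hα t
    have g1 := h1pos (θ t)
    have g2 := h2pos (θ t)
    have g3 := hle (uc (θ t))
    constructor <;> rw [h] <;> nlinarith
  have hθcont : ContinuousOn θ (Set.Icc a b) :=
    fun t ht => (hθ t ht).continuousAt.continuousWithinAt
  have haI : a ∈ Set.Icc a b := Set.left_mem_Icc.2 hab.le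
  have hbI : b ∈ Set.Icc a b := Set.right_mem_Icc.2 hab.le
  -- G₂ monotone
  have hmono : F₂ (θ a) - F₂ (θ b) ≤ b - a := by
    have hG : MonotoneOn (fun t => F₂ (θ t) + t) (Set.Icc a b) := by
      apply monotoneOn_of_hasDerivWithinAt_nonneg (convex_Icc a b)
        (f' := fun t => f₂ (θ t) * θ' t + 1)
      · exact ((continuous_iff_continuousAt.2 fun x => (hF₂ x).continuousAt).comp_continuousOn
          hθcont).add continuousOn_id
      · intro x hx
        rw [interior_Icc] at hx ⊢
        exact (((hF₂ (θ x)).comp x (hθ x (Set.Ioo_subset_Icc_self hx))).add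
          (hasDerivAt_id x)).hasDerivWithinAt
      · intro x hx
        rw [interior_Icc] at hx
        have hb2 := (hbound x hx).2
        have hpos := h2pos (θ x)
        have : f₂ (θ x) * θ' x + 1 = (θ' x + 2 * H₂ (uc (θ x))) / (2 * H₂ (uc (θ x))) := by
          simp only [hf₂def]; field_simp
        rw [this]
        apply div_nonneg (by linarith) (by linarith)
    have := hG haI hbI hab.le
    dsimp only at this
    linarith
  -- G₁ antitone
  have hanti : b - a ≤ F₁ (θ a) - F₁ (θ b) := by
    have hG : AntitoneOn (fun t => F₁ (θ t) + t) (Set.Icc a b) := by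
      apply antitoneOn_of_hasDerivWithinAt_nonpos (convex_Icc a b)
        (f' := fun t => f₁ (θ t) * θ' t + 1)
      · exact ((continuous_iff_continuousAt.2 fun x => (hF₁ x).continuousAt).comp_continuousOn
          hθcont).add continuousOn_id
      · intro x hx
        rw [interior_Icc] at hx ⊢
        exact (((hF₁ (θ x)).comp x (hθ x (Set.Ioo_subset_Icc_self hx))).add
          (hasDerivAt_id x)).hasDerivWithinAt
      · intro x hx
        rw [interior_Icc] at hx
        have hb1 := (hbound x hx).1
        have hpos := h1pos (θ x)
        have : f₁ (θ x) * θ' x + 1 = (θ' x + 2 * H₁ (uc (θ x))) / (2 * H₁ (uc (θ x))) := by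
          simp only [hf₁def]; field_simp
        rw [this]
        apply div_nonpos_of_nonpos_of_nonneg (by linarith) (by linarith)
    have := hG haI hbI hab.le
    dsimp only at this
    linarith
  -- integral identities
  have hθab : θ a = θ b + m * Real.pi := by linarith
  have hid₁ : F₁ (θ a) - F₁ (θ b) = m * τ1p := by
    have hsub := intervalIntegral.integral_interval_sub_left
      (hcont₁.intervalIntegrable (μ := volume) 0 (θ a)) (hcont₁.intervalIntegrable (μ := volume) 0 (θ b))
    rw [hτ₁]
    calc F₁ (θ a) - F₁ (θ b) = ∫ s in (θ b)..(θ a), f₁ s := hsub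
      _ = m * ∫ s in (0:ℝ)..Real.pi, f₁ s := by
          rw [hθab]; exact integral_m_pi hcont₁ hper₁ m (θ b)
  have hid₂ : F₂ (θ a) - F₂ (θ b) = m * τ2p := by
    have hsub := intervalIntegral.integral_interval_sub_left
      (hcont₂.intervalIntegrable (μ := volume) 0 (θ a)) (hcont₂.intervalIntegrable (μ := volume) 0 (θ b))
    rw [hτ₂]
    calc F₂ (θ a) - F₂ (θ b) = ∫ s in (θ b)..(θ a), f₂ s := hsub
      _ = m * ∫ s in (0:ℝ)..Real.pi, f₂ s := by
          rw [hθab]; exact integral_m_pi hcont₂ hper₂ m (θ b)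
  constructor
  · linarith [hmono, hid₂]
  · linarith [hanti, hid₁]
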